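/- There exists a constant C > 0 such that for all a ∈ ℤ' and all L ∈ (0,1], | K^Be(a,a) − ( 1_{a<0} + L²·(1_{a=1/2} − 1_{a=−1/2}) ) | ≤ C·L⁴; that is, uniformly in a ∈ ℤ' one has K^Be(a,a) = 1_{a<0} + L²(δ_{a,1/2} − δ_{a,−1/2}) + O(L⁴) as L → 0. -/

import Mathlib

/-!
Bessel functions of the first kind of integer order and argument `2L`:
`J_n(2L) = ∑_{j≥0} (-1)^j L^{2j+n}/(j!(n+j)!)` for `n ≥ 0`, and `J_{-n} = (-1)^n J_n`.

Half-integers `ℤ' = ℤ + 1/2` are parametrized by `ℤ`: the half-integer `a = m + 1/2`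
corresponds to `m : ℤ`; thus `a < 0 ↔ m < 0`, `a = 1/2 ↔ m = 0`, `a = -1/2 ↔ m = -1`, and
`K^Be(a,a) = ∑_{j≥0} J_{m+j+1}(2L)²`.
-/
noncomputable def besselJnat (L : ℝ) (n : ℕ) : ℝ :=
  ∑' j : ℕ, (-1 : ℝ) ^ j * L ^ (2 * j + n) / (Nat.factorial j * Nat.factorial (n + j))

noncomputable def besselJint (L : ℝ) (n : ℤ) : ℝ :=
  if 0 ≤ n then besselJnat L n.toNat else (-1 : ℝ) ^ (-n).toNat * besselJnat L (-n).toNat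

/-- Diagonal of the discrete Bessel kernel, `K^Be(m + 1/2, m + 1/2)`. -/
noncomputable def KBeDiag (L : ℝ) (m : ℤ) : ℝ :=
  ∑' j : ℕ, besselJint L (m + j + 1) * besselJint L (m + j + 1)


open Finset

noncomputable def bterm (L : ℝ) (n j : ℕ) : ℝ :=
  (-1 : ℝ) ^ j * L ^ (2 * j + n) / (Nat.factorial j * Nat.factorial (n + j))

noncomputable def Efac : ℝ := ∑' j : ℕ, ((Nat.factorial j : ℝ))⁻¹

lemma summable_inv_factorial : Summable fun j : ℕ => ((Nat.factorial j : ℝ))⁻¹ := by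
  simpa using Real.summable_pow_div_factorial 1

lemma Efac_nonneg : 0 ≤ Efac := tsum_nonneg fun j => by positivity

lemma one_le_Efac : 1 ≤ Efac := by
  have := Summable.le_tsum summable_inv_factorial 0 (fun j _ => by positivity)
  simpa [Efac] using this


lemma abs_bterm_le {L : ℝ} (hL0 : 0 ≤ L) (hL1 : L ≤ 1) (n t j : ℕ) :
    |bterm L n (t + j)| ≤ L ^ (n + 2 * t) / Nat.factorial n * (Nat.factorial j : ℝ)⁻¹ := by
  have h1 : |bterm L n (t + j)| =
      L ^ (2 * (t + j) + n) / (Nat.factorial (t + j) * Nat.factorial (n + (t + j))) := by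
    rw [bterm, abs_div, abs_mul, abs_pow, abs_neg, abs_one, one_pow, one_mul, abs_pow,
      abs_of_nonneg hL0, abs_of_nonneg (by positivity)]
  rw [h1]
  have hfj : (Nat.factorial j : ℝ) ≤ Nat.factorial (t + j) := by
    exact_mod_cast Nat.factorial_le (Nat.le_add_left j t)
  have hfn : (Nat.factorial n : ℝ) ≤ Nat.factorial (n + (t + j)) := by
    exact_mod_cast Nat.factorial_le (Nat.le_add_right n (t + j))
  have hLpow : L ^ (2 * (t + j) + n) ≤ L ^ (n + 2 * t) := by
    apply pow_le_pow_of_le_one hL0 hL1; omega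
  have h2 : L ^ (n + 2 * t) / Nat.factorial n * (Nat.factorial j : ℝ)⁻¹
      = L ^ (n + 2 * t) / ((Nat.factorial j : ℝ) * Nat.factorial n) := by
    rw [div_mul_eq_div_div, div_div]; ring_nf
  rw [h2]
  apply div_le_div₀ (by positivity) hLpow (by positivity)
  exact mul_le_mul hfj hfn (by positivity) (by positivity)


lemma summable_bterm {L : ℝ} (hL0 : 0 ≤ L) (hL1 : L ≤ 1) (n : ℕ) :
    Summable fun j => bterm L n j := by
  apply Summable.of_abs
  apply Summable.of_nonneg_of_le (fun j => abs_nonneg _)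
    (fun j => by simpa using abs_bterm_le hL0 hL1 n 0 j)
  exact summable_inv_factorial.mul_left _

lemma besselJnat_eq_tsum (L : ℝ) (n : ℕ) : besselJnat L n = ∑' j, bterm L n j := rfl

lemma besselJnat_tail {L : ℝ} (hL0 : 0 ≤ L) (hL1 : L ≤ 1) (n t : ℕ) :
    |besselJnat L n - ∑ j ∈ range t, bterm L n j| ≤ Efac * (L ^ (n + 2 * t) / Nat.factorial n) := by
  have hs := summable_bterm hL0 hL1 n
  have hsplit := Summable.sum_add_tsum_nat_add (f := fun j => bterm L n j) t hs
  have h1 : besselJnat L n - ∑ j ∈ range t, bterm L n j = ∑' j, bterm L n (j + t) := by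
    rw [besselJnat_eq_tsum, ← hsplit]; ring
  rw [h1]
  have hb : ∀ j, |bterm L n (j + t)| ≤ L ^ (n + 2 * t) / Nat.factorial n * (Nat.factorial j : ℝ)⁻¹ := by
    intro j; rw [add_comm j t]; exact abs_bterm_le hL0 hL1 n t j
  have hsb : Summable fun j => |bterm L n (j + t)| := by
    apply Summable.of_nonneg_of_le (fun j => abs_nonneg _) hb
    exact summable_inv_factorial.mul_left _
  calc |∑' j, bterm L n (j + t)| ≤ ∑' j, |bterm L n (j + t)| := by
        simpa using norm_tsum_le_tsum_norm (f := fun j => bterm L n (j + t)) (by simpa using hsb)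
    _ ≤ ∑' j : ℕ, L ^ (n + 2 * t) / Nat.factorial n * (Nat.factorial j : ℝ)⁻¹ :=
        Summable.tsum_le_tsum hb hsb (summable_inv_factorial.mul_left _)
    _ = Efac * (L ^ (n + 2 * t) / Nat.factorial n) := by
        rw [tsum_mul_left, mul_comm]; rfl


lemma abs_besselJnat_le {L : ℝ} (hL0 : 0 ≤ L) (hL1 : L ≤ 1) (n : ℕ) :
    |besselJnat L n| ≤ Efac * (L ^ n / Nat.factorial n) := by
  simpa using besselJnat_tail hL0 hL1 n 0

lemma besselJnat_sub_one {L : ℝ} (hL0 : 0 ≤ L) (hL1 : L ≤ 1) (n : ℕ) :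
    |besselJnat L n - L ^ n / Nat.factorial n| ≤ Efac * (L ^ (n + 2) / Nat.factorial n) := by
  have := besselJnat_tail hL0 hL1 n 1
  simpa [bterm, Nat.factorial] using this

lemma besselJnat_zero_approx {L : ℝ} (hL0 : 0 ≤ L) (hL1 : L ≤ 1) :
    |besselJnat L 0 - (1 - L ^ 2)| ≤ Efac * L ^ 4 := by
  have := besselJnat_tail hL0 hL1 0 2
  have hsum : ∑ j ∈ range 2, bterm L 0 j = 1 - L ^ 2 := by
    simp [Finset.sum_range_succ, bterm, Nat.factorial]
    ring
  rw [hsum] at this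
  simpa using this

lemma sq_bound {L : ℝ} (hL0 : 0 ≤ L) (hL1 : L ≤ 1) (n₀ j : ℕ) :
    (besselJnat L (n₀ + j)) ^ 2 ≤ Efac ^ 2 * L ^ (2 * n₀) * (Nat.factorial j : ℝ)⁻¹ := by
  have h1 := abs_besselJnat_le hL0 hL1 (n₀ + j)
  have h2 : (besselJnat L (n₀ + j)) ^ 2 ≤ (Efac * (L ^ (n₀ + j) / Nat.factorial (n₀ + j))) ^ 2 := by
    rw [← sq_abs]
    exact pow_le_pow_left₀ (abs_nonneg _) h1 2
  refine h2.trans ?_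
  have hf : (Nat.factorial j : ℝ) ≤ ((Nat.factorial (n₀ + j) : ℝ)) ^ 2 := by
    have h3 : (Nat.factorial j : ℝ) ≤ Nat.factorial (n₀ + j) := by
      exact_mod_cast Nat.factorial_le (Nat.le_add_left j n₀)
    have h4 : (1 : ℝ) ≤ Nat.factorial (n₀ + j) := by exact_mod_cast Nat.one_le_iff_ne_zero.mpr (Nat.factorial_ne_zero _)
    nlinarith
  have hLp : (L ^ (n₀ + j)) ^ 2 ≤ L ^ (2 * n₀) := by
    rw [← pow_mul]
    apply pow_le_pow_of_le_one hL0 hL1; omega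
  have hfpos : (0:ℝ) < Nat.factorial (n₀ + j) := by exact_mod_cast (Nat.factorial_pos _)
  have hjpos : (0:ℝ) < Nat.factorial j := by exact_mod_cast (Nat.factorial_pos _)
  rw [mul_pow, div_pow]
  calc Efac ^ 2 * ((L ^ (n₀ + j)) ^ 2 / ((Nat.factorial (n₀ + j):ℝ)) ^ 2)
      ≤ Efac ^ 2 * (L ^ (2 * n₀) / (Nat.factorial j : ℝ)) := by
        apply mul_le_mul_of_nonneg_left _ (by positivity)
        exact div_le_div₀ (by positivity) hLp hjpos hf
    _ = Efac ^ 2 * L ^ (2 * n₀) * (Nat.factorial j : ℝ)⁻¹ := by ring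


/-- the summand of the Bessel series extended to integer order. -/
noncomputable def gterm (L : ℝ) (n : ℤ) (j : ℕ) : ℝ :=
  if 0 ≤ n + j then
    (-1 : ℝ) ^ j * L ^ (j + (n + j).toNat) / (Nat.factorial j * Nat.factorial (n + j).toNat)
  else 0

noncomputable def bb (s : ℤ) : ℝ := if 0 ≤ s then ((s.toNat.factorial : ℝ))⁻¹ else 0

lemma bb_nonneg (s : ℤ) : 0 ≤ bb s := by unfold bb; split <;> positivity

lemma bb_le_one (s : ℤ) : bb s ≤ 1 := by
  unfold bb; split
  · rw [inv_le_one_iff₀]; right; exact_mod_cast Nat.one_le_iff_ne_zero.mpr (Nat.factorial_ne_zero _)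
  · norm_num

lemma summable_bb : Summable bb := by
  apply Summable.of_nat_of_neg_add_one
  · apply summable_inv_factorial.congr; intro j; simp [bb]
  · apply summable_zero.congr; intro j
    symm; rw [bb, if_neg (by omega)]

lemma abs_gterm_le {L : ℝ} (hL0 : 0 ≤ L) (hL1 : L ≤ 1) (n : ℤ) (j : ℕ) :
    |gterm L n j| ≤ (Nat.factorial j : ℝ)⁻¹ * bb (n + j) := by
  unfold gterm bb
  split
  · rw [abs_div, abs_mul, abs_pow, abs_pow, abs_neg, abs_one, one_pow, one_mul,
      abs_of_nonneg hL0, abs_of_nonneg (by positivity), ← mul_inv]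
    rw [div_le_iff₀ (by positivity), inv_mul_cancel₀ (by positivity)]
    exact pow_le_one₀ hL0 hL1
  · rw [abs_zero, mul_zero]

lemma abs_gterm_le' {L : ℝ} (hL0 : 0 ≤ L) (hL1 : L ≤ 1) (n : ℤ) (j : ℕ) :
    |gterm L n j| ≤ (Nat.factorial j : ℝ)⁻¹ := by
  refine (abs_gterm_le hL0 hL1 n j).trans ?_
  calc (Nat.factorial j : ℝ)⁻¹ * bb (n + j) ≤ (Nat.factorial j : ℝ)⁻¹ * 1 := by
        exact mul_le_mul_of_nonneg_left (bb_le_one _) (by positivity)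
    _ = _ := mul_one _

lemma summable_abs_gterm {L : ℝ} (hL0 : 0 ≤ L) (hL1 : L ≤ 1) (n : ℤ) :
    Summable fun j => |gterm L n j| :=
  Summable.of_nonneg_of_le (fun _ => abs_nonneg _) (fun j => abs_gterm_le' hL0 hL1 n j)
    summable_inv_factorial

lemma besselJint_eq_tsum_g {L : ℝ} (hL0 : 0 ≤ L) (hL1 : L ≤ 1) (n : ℤ) :
    besselJint L n = ∑' j, gterm L n j := by
  rcases le_or_gt 0 n with h | h
  · rw [besselJint, if_pos h, besselJnat_eq_tsum]
    congr 1; funext j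
    have h2 : (0:ℤ) ≤ n + j := by omega
    have h3 : (n + j).toNat = n.toNat + j := by omega
    rw [gterm, if_pos h2, bterm, h3, show j + (n.toNat + j) = 2 * j + n.toNat from by omega]
  · obtain ⟨m, hm1, hnm⟩ : ∃ m : ℕ, 1 ≤ m ∧ n = -(m : ℤ) := ⟨(-n).toNat, by omega, by omega⟩
    have htn : (-n).toNat = m := by omega
    rw [besselJint, if_neg (by omega), htn, besselJnat_eq_tsum, ← tsum_mul_left]
    have hsg : Summable fun j => gterm L n j := (summable_abs_gterm hL0 hL1 n).of_abs
    rw [← Summable.sum_add_tsum_nat_add m hsg]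
    have hzero : ∑ j ∈ range m, gterm L n j = 0 := by
      apply Finset.sum_eq_zero
      intro j hj
      have hj' : j < m := Finset.mem_range.mp hj
      rw [gterm, if_neg (by omega)]
    rw [hzero, zero_add]
    congr 1; funext j
    rw [gterm, if_pos (by omega : (0:ℤ) ≤ n + ((j + m : ℕ) : ℤ))]
    rw [show (n + ((j + m : ℕ) : ℤ)).toNat = j by omega]
    rw [bterm]
    rw [show j + m + j = 2 * j + m by omega, show m + j = j + m by omega, pow_add]
    push_cast
    ring



section Identity
variable {L : ℝ}

/-- shear equivalence on `ℤ × ℕ`. -/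
def shear2 : ℤ × ℕ ≃ ℤ × ℕ where
  toFun p := (p.1 + p.2, p.2)
  invFun p := (p.1 - p.2, p.2)
  left_inv p := by simp
  right_inv p := by simp

/-- shear equivalence on `ℤ × ℕ × ℕ`. -/
def shear3 : ℤ × ℕ × ℕ ≃ ℤ × ℕ × ℕ where
  toFun p := (p.1 - p.2.1 - p.2.2, p.2)
  invFun p := (p.1 + p.2.1 + p.2.2, p.2)
  left_inv p := by ext <;> simp <;> ring
  right_inv p := by ext <;> simp <;> ring

lemma summable_majorant :
    Summable fun p : ℤ × ℕ × ℕ =>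
      (Nat.factorial p.2.1 : ℝ)⁻¹ * bb (p.1 + p.2.1) * (Nat.factorial p.2.2 : ℝ)⁻¹ := by
  have h1 : Summable fun q : ℤ × ℕ => bb q.1 * (Nat.factorial q.2 : ℝ)⁻¹ := by
    apply summable_mul_of_summable_norm (f := bb) (g := fun j : ℕ => (Nat.factorial j : ℝ)⁻¹)
    · apply summable_bb.abs.congr; intro s; rw [Real.norm_eq_abs]
    · apply summable_inv_factorial.congr; intro j
      rw [Real.norm_eq_abs, abs_of_nonneg (by positivity)]
  have h2 : Summable fun q : ℤ × ℕ => bb (q.1 + q.2) * (Nat.factorial q.2 : ℝ)⁻¹ := by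
    exact (shear2.summable_iff (f := fun q : ℤ × ℕ => bb q.1 * (Nat.factorial q.2 : ℝ)⁻¹)).mpr h1
  have h3 : Summable fun z : (ℤ × ℕ) × ℕ =>
      (bb (z.1.1 + z.1.2) * (Nat.factorial z.1.2 : ℝ)⁻¹) * (Nat.factorial z.2 : ℝ)⁻¹ := by
    apply summable_mul_of_summable_norm
      (f := fun q : ℤ × ℕ => bb (q.1 + q.2) * (Nat.factorial q.2 : ℝ)⁻¹)
      (g := fun j : ℕ => (Nat.factorial j : ℝ)⁻¹)
    · apply h2.abs.congr; intro s; rw [Real.norm_eq_abs]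
    · apply summable_inv_factorial.congr; intro j
      rw [Real.norm_eq_abs, abs_of_nonneg (by positivity)]
  have h4 := ((Equiv.prodAssoc ℤ ℕ ℕ).symm.summable_iff
    (f := fun z : (ℤ × ℕ) × ℕ =>
      (bb (z.1.1 + z.1.2) * (Nat.factorial z.1.2 : ℝ)⁻¹) * (Nat.factorial z.2 : ℝ)⁻¹)).mpr h3
  apply h4.congr
  intro p
  simp only [Function.comp_apply, Equiv.prodAssoc_symm_apply]
  ring

lemma abs_sum_gterm (hL0 : 0 ≤ L) (hL1 : L ≤ 1) : Summable fun p : ℤ × ℕ × ℕ => |gterm L p.1 p.2.1 * gterm L p.1 p.2.2| := by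
  apply Summable.of_nonneg_of_le (fun p => abs_nonneg _) _ summable_majorant
  intro p
  rw [abs_mul]
  calc |gterm L p.1 p.2.1| * |gterm L p.1 p.2.2|
      ≤ ((Nat.factorial p.2.1 : ℝ)⁻¹ * bb (p.1 + p.2.1)) * (Nat.factorial p.2.2 : ℝ)⁻¹ :=
        mul_le_mul (abs_gterm_le hL0 hL1 _ _) (abs_gterm_le' hL0 hL1 _ _) (abs_nonneg _)
          (mul_nonneg (by positivity) (bb_nonneg _))
    _ = (Nat.factorial p.2.1 : ℝ)⁻¹ * bb (p.1 + p.2.1) * (Nat.factorial p.2.2 : ℝ)⁻¹ := by ring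

lemma summable_Fg (hL0 : 0 ≤ L) (hL1 : L ≤ 1) : Summable fun p : ℤ × ℕ × ℕ => gterm L p.1 p.2.1 * gterm L p.1 p.2.2 :=
  (abs_sum_gterm hL0 hL1).of_abs

noncomputable def ufun (L : ℝ) (N : ℤ) (j : ℕ) : ℝ :=
  if (j : ℤ) ≤ N then
    (-1 : ℝ) ^ j * L ^ N.toNat / (Nat.factorial j * Nat.factorial (N - j).toNat)
  else 0

lemma ufun_eq_zero_outside (N : ℤ) : ∀ j ∉ range (N.toNat + 1), ufun L N j = 0 := by
  intro j hj
  rw [Finset.mem_range, not_lt] at hj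
  rw [ufun, if_neg (by omega)]

lemma summable_abs_ufun (N : ℤ) : Summable fun j => ‖ufun L N j‖ := by
  apply summable_of_ne_finset_zero (s := range (N.toNat + 1))
  intro j hj
  rw [ufun_eq_zero_outside N j hj, norm_zero]

lemma F_pointwise (N : ℤ) (j k : ℕ) :
    gterm L (N - j - k) j * gterm L (N - j - k) k = ufun L N j * ufun L N k := by
  unfold gterm ufun
  by_cases hj : (j : ℤ) ≤ N
  · by_cases hk : (k : ℤ) ≤ N
    · rw [if_pos (show (0:ℤ) ≤ N - ↑j - ↑k + ↑j by omega),
        if_pos (show (0:ℤ) ≤ N - ↑j - ↑k + ↑k by omega), if_pos hj, if_pos hk]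
      have e1 : (N - ↑j - ↑k + ↑j).toNat = (N - ↑k).toNat := by omega
      have e2 : (N - ↑j - ↑k + ↑k).toNat = (N - ↑j).toNat := by omega
      rw [e1, e2]
      have e3 : j + (N - ↑k).toNat + (k + (N - ↑j).toNat) = N.toNat + N.toNat := by omega
      rw [div_mul_div_comm, div_mul_div_comm]
      congr 1
      · rw [mul_mul_mul_comm, ← pow_add, ← pow_add, e3, pow_add, pow_add, mul_mul_mul_comm]
      · push_cast; ring
    · rw [if_neg (show ¬ (0:ℤ) ≤ N - ↑j - ↑k + ↑j by omega), if_neg hk, zero_mul, mul_zero]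
  · rw [if_neg (show ¬ (0:ℤ) ≤ N - ↑j - ↑k + ↑k by omega), if_neg hj, mul_zero, zero_mul]

lemma inner_eval (N : ℤ) :
    (∑' jk : ℕ × ℕ, gterm L (N - jk.1 - jk.2) jk.1 * gterm L (N - jk.1 - jk.2) jk.2)
      = (∑' j, ufun L N j) * (∑' j, ufun L N j) := by
  rw [tsum_congr (fun jk : ℕ × ℕ => F_pointwise N jk.1 jk.2)]
  exact (tsum_mul_tsum_of_summable_norm (summable_abs_ufun N) (summable_abs_ufun N)).symm

lemma tsum_ufun (N : ℤ) : (∑' j, ufun L N j) = if N = 0 then 1 else 0 := by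
  rw [tsum_eq_sum (ufun_eq_zero_outside N)]
  rcases lt_or_ge N 0 with hN | hN
  · rw [if_neg (by omega)]
    apply Finset.sum_eq_zero
    intro j hj
    rw [ufun, if_neg (by omega)]
  · obtain ⟨Nn, rfl⟩ : ∃ Nn : ℕ, N = (Nn : ℤ) := ⟨N.toNat, by omega⟩
    have htn : ((Nn : ℤ)).toNat = Nn := by omega
    have hterm : ∀ j ∈ range (Nn + 1), ufun L (Nn : ℤ) j
        = L ^ Nn / Nat.factorial Nn * ((-1 : ℝ) ^ j * (Nn.choose j)) := by
      intro j hj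
      have hjn : j ≤ Nn := by have := Finset.mem_range.mp hj; omega
      have hC : ((Nn.choose j : ℝ)) * (Nat.factorial j : ℝ) * (Nat.factorial (Nn - j) : ℝ)
          = (Nat.factorial Nn : ℝ) := by
        exact_mod_cast congrArg (fun x : ℕ => (x : ℝ))
          (Nat.choose_mul_factorial_mul_factorial hjn)
      rw [ufun, if_pos (by exact_mod_cast hjn), htn,
        show ((Nn : ℤ) - j).toNat = Nn - j by omega]
      have hfj : (0:ℝ) < Nat.factorial j := by exact_mod_cast Nat.factorial_pos _
      have hfnj : (0:ℝ) < Nat.factorial (Nn - j) := by exact_mod_cast Nat.factorial_pos _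
      have hfn : (0:ℝ) < Nat.factorial Nn := by exact_mod_cast Nat.factorial_pos _
      have hrhs : L ^ Nn / Nat.factorial Nn * ((-1 : ℝ) ^ j * (Nn.choose j))
          = ((-1 : ℝ) ^ j * (L ^ Nn * (Nn.choose j))) / Nat.factorial Nn := by ring
      rw [hrhs, div_eq_div_iff (by positivity) (ne_of_gt hfn)]
      linear_combination (-((-1 : ℝ) ^ j * L ^ Nn)) * hC
    rw [htn, Finset.sum_congr rfl hterm, ← Finset.mul_sum]
    have halt : (∑ j ∈ range (Nn + 1), (-1 : ℝ) ^ j * (Nn.choose j))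
        = if Nn = 0 then 1 else 0 := by
      have := Int.alternating_sum_range_choose (n := Nn)
      have h2 := congrArg (fun x : ℤ => (x : ℝ)) this
      push_cast at h2
      rw [h2]
    rw [halt]
    by_cases h0 : Nn = 0
    · subst h0; norm_num
    · rw [if_neg h0, if_neg (by exact_mod_cast h0), mul_zero]

theorem tsum_besselJint_sq (hL0 : 0 ≤ L) (hL1 : L ≤ 1) :
    ∑' n : ℤ, besselJint L n * besselJint L n = 1 := by
  set F : ℤ × ℕ × ℕ → ℝ := fun p => gterm L p.1 p.2.1 * gterm L p.1 p.2.2 with hFdef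
  have hF : Summable F := summable_Fg hL0 hL1
  have hnorm : ∀ n : ℤ, Summable fun j => ‖gterm L n j‖ := by
    intro n
    apply (summable_abs_gterm hL0 hL1 n).congr
    intro j; rw [Real.norm_eq_abs]
  have h1 : ∀ n : ℤ, besselJint L n * besselJint L n
      = ∑' jk : ℕ × ℕ, gterm L n jk.1 * gterm L n jk.2 := by
    intro n
    rw [besselJint_eq_tsum_g hL0 hL1]
    exact tsum_mul_tsum_of_summable_norm (hnorm n) (hnorm n)
  rw [tsum_congr h1]
  have h2 : (∑' (n : ℤ), ∑' jk : ℕ × ℕ, gterm L n jk.1 * gterm L n jk.2)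
      = ∑' p : ℤ × ℕ × ℕ, F p := (Summable.tsum_prod' hF hF.prod_factor).symm
  rw [h2, ← shear3.tsum_eq F]
  have hFs : Summable (F ∘ shear3) := shear3.summable_iff.mpr hF
  have h3 : (∑' p : ℤ × ℕ × ℕ, F (shear3 p))
      = ∑' (N : ℤ), ∑' jk : ℕ × ℕ, F (shear3 (N, jk)) := Summable.tsum_prod' hFs hFs.prod_factor
  rw [h3]
  have h4 : ∀ N : ℤ, (∑' jk : ℕ × ℕ, F (shear3 (N, jk))) = if N = 0 then 1 else 0 := by
    intro N
    have : (∑' jk : ℕ × ℕ, F (shear3 (N, jk)))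
        = ∑' jk : ℕ × ℕ, gterm L (N - jk.1 - jk.2) jk.1 * gterm L (N - jk.1 - jk.2) jk.2 := rfl
    rw [this, inner_eval, tsum_ufun]
    split <;> norm_num
  rw [tsum_congr h4]
  exact tsum_ite_eq (0 : ℤ) (fun _ => (1 : ℝ))

end Identity



lemma besselJint_mul_self (L : ℝ) (n : ℤ) :
    besselJint L n * besselJint L n = (besselJnat L n.natAbs) ^ 2 := by
  rw [besselJint]; split
  · rw [show n.toNat = n.natAbs from by omega, sq]
  · rw [show (-n).toNat = n.natAbs from by omega]
    have h1 : ((-1 : ℝ) ^ (n.natAbs)) ^ 2 = 1 := by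
      rw [← pow_mul]
      exact Even.neg_one_pow ⟨n.natAbs, by ring⟩
    calc ((-1 : ℝ) ^ n.natAbs * besselJnat L n.natAbs) *
          ((-1 : ℝ) ^ n.natAbs * besselJnat L n.natAbs)
        = ((-1 : ℝ) ^ (n.natAbs)) ^ 2 * (besselJnat L n.natAbs) ^ 2 := by ring
      _ = (besselJnat L n.natAbs) ^ 2 := by rw [h1, one_mul]

lemma summable_sq_int {L : ℝ} (hL0 : 0 ≤ L) (hL1 : L ≤ 1) :
    Summable fun n : ℤ => besselJint L n * besselJint L n := by
  have hmaj : Summable fun n : ℤ => Efac ^ 2 * ((n.natAbs.factorial : ℝ))⁻¹ := by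
    apply Summable.mul_left
    apply Summable.of_nat_of_neg_add_one
    · apply summable_inv_factorial.congr; intro j; simp
    · have h := (summable_nat_add_iff (f := fun j : ℕ => ((Nat.factorial j : ℝ))⁻¹) 1).mpr
        summable_inv_factorial
      apply h.congr; intro j
      rw [show ((-(j + 1) : ℤ)).natAbs = j + 1 from by omega]
  have hle : ∀ n : ℤ, besselJint L n * besselJint L n
      ≤ Efac ^ 2 * ((n.natAbs.factorial : ℝ))⁻¹ := by
    intro n
    rw [besselJint_mul_self]
    have := sq_bound hL0 hL1 0 n.natAbs
    simpa using this
  have hnn : ∀ n : ℤ, 0 ≤ besselJint L n * besselJint L n := by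
    intro n; rw [besselJint_mul_self]; positivity
  exact Summable.of_nonneg_of_le hnn hle hmaj

lemma summable_sq_shift {L : ℝ} (hL0 : 0 ≤ L) (hL1 : L ≤ 1) (n₀ : ℕ) :
    Summable fun j : ℕ => (besselJnat L (n₀ + j)) ^ 2 :=
  Summable.of_nonneg_of_le (fun j => by positivity) (fun j => sq_bound hL0 hL1 n₀ j)
    (summable_inv_factorial.mul_left _)

lemma tsum_sq_shift_le {L : ℝ} (hL0 : 0 ≤ L) (hL1 : L ≤ 1) (n₀ : ℕ) :
    ∑' j : ℕ, (besselJnat L (n₀ + j)) ^ 2 ≤ Efac ^ 3 * L ^ (2 * n₀) := by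
  calc ∑' j : ℕ, (besselJnat L (n₀ + j)) ^ 2
      ≤ ∑' j : ℕ, Efac ^ 2 * L ^ (2 * n₀) * (Nat.factorial j : ℝ)⁻¹ :=
        Summable.tsum_le_tsum (fun j => sq_bound hL0 hL1 n₀ j) (summable_sq_shift hL0 hL1 n₀)
          (summable_inv_factorial.mul_left _)
    _ = Efac ^ 2 * L ^ (2 * n₀) * Efac := by rw [tsum_mul_left]; rfl
    _ = Efac ^ 3 * L ^ (2 * n₀) := by ring


/-- uniformly in `a ∈ ℤ'`, as `L → 0`,
`K^Be(a,a) = 1_{a<0} + L² (δ_{a,1/2} - δ_{a,-1/2}) + O(L⁴)`. -/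

theorem KBeDiag_small_L_expansion :
    ∃ C : ℝ, 0 < C ∧ ∀ m : ℤ, ∀ L : ℝ, L ∈ Set.Ioc (0 : ℝ) 1 →
      |KBeDiag L m -
          ((if m < 0 then (1 : ℝ) else 0) +
            L ^ 2 * ((if m = 0 then (1 : ℝ) else 0) - (if m = -1 then (1 : ℝ) else 0)))| ≤
        C * L ^ 4 := by
  have hE := Efac_nonneg
  have hE1 := one_le_Efac
  refine ⟨2 * Efac ^ 3 + 2 * Efac ^ 2 + 2 * Efac + 1, by nlinarith, ?_⟩
  intro m L hL
  obtain ⟨hL0, hL1⟩ := hL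
  have hL0' : (0 : ℝ) ≤ L := le_of_lt hL0
  have hL4 : (0 : ℝ) ≤ L ^ 4 := by positivity
  set f : ℤ → ℝ := fun n => besselJint L n * besselJint L n with hfdef
  have hf : Summable f := summable_sq_int hL0' hL1
  have hshift : Summable fun n : ℤ => f (n + (m + 1)) := by
    have := ((Equiv.addRight (m + 1)).summable_iff (f := f)).mpr hf
    exact this
  have hp : (Summable fun k : ℕ => f ((k : ℤ) + (m + 1)))
      ∧ (Summable fun k : ℕ => f (-((k : ℤ) + 1) + (m + 1))) := by
    constructor
    · exact hshift.comp_injective (fun a b hab => by omega)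
    · exact hshift.comp_injective (fun a b hab => by omega)
  have hK : KBeDiag L m = ∑' k : ℕ, f ((k : ℤ) + (m + 1)) := by
    rw [KBeDiag]
    exact tsum_congr fun j => congrArg f (by ring)
  have hsplit : (1 : ℝ) = KBeDiag L m + ∑' k : ℕ, f (m - k) := by
    have h1 := tsum_of_nat_of_neg_add_one (f := fun n : ℤ => f (n + (m + 1))) hp.1 hp.2
    have h2 : (∑' n : ℤ, f (n + (m + 1))) = ∑' n : ℤ, f n := by
      rw [← (Equiv.addRight (m + 1)).tsum_eq f]
      exact tsum_congr fun n => congrArg f (by simp [add_assoc])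
    have h3 : (∑' k : ℕ, f (-((k : ℤ) + 1) + (m + 1))) = ∑' k : ℕ, f (m - k) :=
      tsum_congr fun k => congrArg f (by ring)
    have h4 : (∑' n : ℤ, f n) = 1 := tsum_besselJint_sq hL0' hL1
    rw [← h4, ← h2, h1, h3, hK]
  rcases lt_trichotomy m (-1) with hm | hm | hm
  · -- m ≤ -2
    rw [if_pos (by omega), if_neg (by omega), if_neg (by omega)]
    have hTeq : (∑' k : ℕ, f (m - k)) = ∑' k : ℕ, (besselJnat L ((-m).toNat + k)) ^ 2 :=
      tsum_congr fun k => by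
        show besselJint L (m - (k : ℤ)) * besselJint L (m - (k : ℤ)) = _
        rw [besselJint_mul_self, show ((m - (k : ℤ)).natAbs) = (-m).toNat + k from by omega]
    have hTnn : 0 ≤ ∑' k : ℕ, f (m - k) := by
      rw [hTeq]; exact tsum_nonneg fun k => by positivity
    have hTle : (∑' k : ℕ, f (m - k)) ≤ Efac ^ 3 * L ^ (2 * (-m).toNat) := by
      rw [hTeq]; exact tsum_sq_shift_le hL0' hL1 _
    have hpow : L ^ (2 * (-m).toNat) ≤ L ^ 4 :=
      pow_le_pow_of_le_one hL0' hL1 (by omega)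
    have hKd : KBeDiag L m - (1 + L ^ 2 * ((0 : ℝ) - 0)) = -(∑' k : ℕ, f (m - k)) := by
      rw [eq_neg_iff_add_eq_zero]
      have := hsplit
      ring_nf
      ring_nf at this
      linarith
    rw [hKd, abs_neg, abs_of_nonneg hTnn]
    calc (∑' k : ℕ, f (m - k)) ≤ Efac ^ 3 * L ^ (2 * (-m).toNat) := hTle
      _ ≤ Efac ^ 3 * L ^ 4 := by
          exact mul_le_mul_of_nonneg_left hpow (by positivity)
      _ ≤ (2 * Efac ^ 3 + 2 * Efac ^ 2 + 2 * Efac + 1) * L ^ 4 :=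
          mul_le_mul_of_nonneg_right (by nlinarith) hL4
  · -- m = -1
    subst hm
    rw [if_pos (by omega), if_neg (by omega), if_pos rfl]
    have hKeq : KBeDiag L (-1) = ∑' k : ℕ, (besselJnat L k) ^ 2 := by
      rw [hK]
      exact tsum_congr fun k => by
        show besselJint L ((k : ℤ) + (-1 + 1)) * besselJint L ((k : ℤ) + (-1 + 1)) = _
        rw [besselJint_mul_self, show (((k : ℤ) + (-1 + 1)).natAbs) = k from by omega]
    have hs0 : Summable fun k : ℕ => (besselJnat L k) ^ 2 := by
      apply (summable_sq_shift hL0' hL1 0).congr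
      intro k; rw [Nat.zero_add]
    have hs1 : Summable fun k : ℕ => (besselJnat L (k + 1)) ^ 2 := by
      apply (summable_sq_shift hL0' hL1 1).congr
      intro k; rw [show 1 + k = k + 1 from by omega]
    have hsplit1 := Summable.tsum_eq_zero_add hs0
    have hsplit2 := Summable.tsum_eq_zero_add hs1
    have htail2 : (∑' k : ℕ, (besselJnat L (k + 1 + 1)) ^ 2)
        = ∑' k : ℕ, (besselJnat L (2 + k)) ^ 2 :=
      tsum_congr fun k => by rw [show k + 1 + 1 = 2 + k from by omega]
    have htail_le : (∑' k : ℕ, (besselJnat L (2 + k)) ^ 2) ≤ Efac ^ 3 * L ^ 4 := by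
      have := tsum_sq_shift_le hL0' hL1 2
      simpa using this
    have htail_nn : 0 ≤ ∑' k : ℕ, (besselJnat L (2 + k)) ^ 2 :=
      tsum_nonneg fun k => by positivity
    have hKval : KBeDiag L (-1) = (besselJnat L 0) ^ 2 + (besselJnat L 1) ^ 2
        + ∑' k : ℕ, (besselJnat L (2 + k)) ^ 2 := by
      rw [hKeq, hsplit1, hsplit2, htail2]; ring
    -- J0 and J1 estimates
    have hJ0 := besselJnat_zero_approx hL0' hL1
    have hJ0abs : |besselJnat L 0| ≤ Efac := by
      have := abs_besselJnat_le hL0' hL1 0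
      simpa using this
    have hJ1 : |besselJnat L 1 - L| ≤ Efac * L ^ 3 := by
      have := besselJnat_sub_one hL0' hL1 1
      simpa [Nat.factorial] using this
    have hJ1abs : |besselJnat L 1| ≤ Efac * L := by
      have := abs_besselJnat_le hL0' hL1 1
      simpa [Nat.factorial] using this
    have hL2 : L ^ 2 ≤ 1 := pow_le_one₀ hL0' hL1
    have hJ0sq : |(besselJnat L 0) ^ 2 - (1 - 2 * L ^ 2 + L ^ 4)| ≤ (Efac ^ 2 + Efac) * L ^ 4 := by
      have hfac : (besselJnat L 0) ^ 2 - (1 - 2 * L ^ 2 + L ^ 4)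
          = (besselJnat L 0 - (1 - L ^ 2)) * (besselJnat L 0 + (1 - L ^ 2)) := by ring
      rw [hfac, abs_mul]
      have h2 : |besselJnat L 0 + (1 - L ^ 2)| ≤ Efac + 1 := by
        calc |besselJnat L 0 + (1 - L ^ 2)| ≤ |besselJnat L 0| + |1 - L ^ 2| := abs_add_le _ _
          _ ≤ Efac + 1 := by
              have : |1 - L ^ 2| ≤ 1 := by rw [abs_of_nonneg (by nlinarith)]; nlinarith
              linarith
      calc |besselJnat L 0 - (1 - L ^ 2)| * |besselJnat L 0 + (1 - L ^ 2)|
          ≤ (Efac * L ^ 4) * (Efac + 1) :=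
            mul_le_mul hJ0 h2 (abs_nonneg _) (by positivity)
        _ = (Efac ^ 2 + Efac) * L ^ 4 := by ring
    have hJ1sq : |(besselJnat L 1) ^ 2 - L ^ 2| ≤ (Efac ^ 2 + Efac) * L ^ 4 := by
      have hfac : (besselJnat L 1) ^ 2 - L ^ 2
          = (besselJnat L 1 - L) * (besselJnat L 1 + L) := by ring
      rw [hfac, abs_mul]
      have h2 : |besselJnat L 1 + L| ≤ Efac * L + L := by
        calc |besselJnat L 1 + L| ≤ |besselJnat L 1| + |L| := abs_add_le _ _
          _ ≤ Efac * L + L := by rw [abs_of_nonneg hL0']; linarith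
      calc |besselJnat L 1 - L| * |besselJnat L 1 + L|
          ≤ (Efac * L ^ 3) * (Efac * L + L) :=
            mul_le_mul hJ1 h2 (abs_nonneg _) (by positivity)
        _ = (Efac ^ 2 + Efac) * L ^ 4 := by ring
    have hdecomp : KBeDiag L (-1) - (1 + L ^ 2 * ((0 : ℝ) - 1))
        = ((besselJnat L 0) ^ 2 - (1 - 2 * L ^ 2 + L ^ 4))
          + ((besselJnat L 1) ^ 2 - L ^ 2)
          + (∑' k : ℕ, (besselJnat L (2 + k)) ^ 2) + L ^ 4 := by
      rw [hKval]; ring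
    rw [hdecomp]
    have habs : |((besselJnat L 0) ^ 2 - (1 - 2 * L ^ 2 + L ^ 4))
          + ((besselJnat L 1) ^ 2 - L ^ 2)
          + (∑' k : ℕ, (besselJnat L (2 + k)) ^ 2) + L ^ 4|
        ≤ (Efac ^ 2 + Efac) * L ^ 4 + (Efac ^ 2 + Efac) * L ^ 4 + Efac ^ 3 * L ^ 4 + L ^ 4 := by
      have t1 := abs_add_le (((besselJnat L 0) ^ 2 - (1 - 2 * L ^ 2 + L ^ 4))
          + ((besselJnat L 1) ^ 2 - L ^ 2) + (∑' k : ℕ, (besselJnat L (2 + k)) ^ 2)) (L ^ 4)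
      have t2 := abs_add_le (((besselJnat L 0) ^ 2 - (1 - 2 * L ^ 2 + L ^ 4))
          + ((besselJnat L 1) ^ 2 - L ^ 2)) (∑' k : ℕ, (besselJnat L (2 + k)) ^ 2)
      have t3 := abs_add_le ((besselJnat L 0) ^ 2 - (1 - 2 * L ^ 2 + L ^ 4))
          ((besselJnat L 1) ^ 2 - L ^ 2)
      have t4 : |∑' k : ℕ, (besselJnat L (2 + k)) ^ 2| ≤ Efac ^ 3 * L ^ 4 := by
        rw [abs_of_nonneg htail_nn]; exact htail_le
      have t5 : |L ^ 4| = L ^ 4 := abs_of_nonneg hL4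
      linarith
    refine habs.trans ?_
    have hcomb : (Efac ^ 2 + Efac) * L ^ 4 + (Efac ^ 2 + Efac) * L ^ 4 + Efac ^ 3 * L ^ 4 + L ^ 4
        = (Efac ^ 3 + 2 * Efac ^ 2 + 2 * Efac + 1) * L ^ 4 := by ring
    rw [hcomb]
    exact mul_le_mul_of_nonneg_right (by nlinarith) hL4
  · -- m ≥ 0
    rcases lt_trichotomy m 0 with hm0 | hm0 | hm0
    · omega
    · -- m = 0
      subst hm0
      rw [if_neg (by omega), if_pos rfl, if_neg (by omega)]
      have hKeq : KBeDiag L 0 = ∑' k : ℕ, (besselJnat L (1 + k)) ^ 2 := by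
        rw [hK]
        exact tsum_congr fun k => by
          show besselJint L ((k : ℤ) + (0 + 1)) * besselJint L ((k : ℤ) + (0 + 1)) = _
          rw [besselJint_mul_self, show (((k : ℤ) + (0 + 1)).natAbs) = 1 + k from by omega]
      have hs1 : Summable fun k : ℕ => (besselJnat L (1 + k)) ^ 2 := summable_sq_shift hL0' hL1 1
      have hsplit1 := Summable.tsum_eq_zero_add hs1
      have htail2 : (∑' k : ℕ, (besselJnat L (1 + (k + 1))) ^ 2)
          = ∑' k : ℕ, (besselJnat L (2 + k)) ^ 2 :=
        tsum_congr fun k => by rw [show 1 + (k + 1) = 2 + k from by omega]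
      have htail_le : (∑' k : ℕ, (besselJnat L (2 + k)) ^ 2) ≤ Efac ^ 3 * L ^ 4 := by
        have := tsum_sq_shift_le hL0' hL1 2
        simpa using this
      have htail_nn : 0 ≤ ∑' k : ℕ, (besselJnat L (2 + k)) ^ 2 :=
        tsum_nonneg fun k => by positivity
      have hKval : KBeDiag L 0 = (besselJnat L 1) ^ 2
          + ∑' k : ℕ, (besselJnat L (2 + k)) ^ 2 := by
        rw [hKeq, hsplit1, htail2]
      have hJ1 : |besselJnat L 1 - L| ≤ Efac * L ^ 3 := by
        have := besselJnat_sub_one hL0' hL1 1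
        simpa [Nat.factorial] using this
      have hJ1abs : |besselJnat L 1| ≤ Efac * L := by
        have := abs_besselJnat_le hL0' hL1 1
        simpa [Nat.factorial] using this
      have hJ1sq : |(besselJnat L 1) ^ 2 - L ^ 2| ≤ (Efac ^ 2 + Efac) * L ^ 4 := by
        have hfac : (besselJnat L 1) ^ 2 - L ^ 2
            = (besselJnat L 1 - L) * (besselJnat L 1 + L) := by ring
        rw [hfac, abs_mul]
        have h2 : |besselJnat L 1 + L| ≤ Efac * L + L := by
          calc |besselJnat L 1 + L| ≤ |besselJnat L 1| + |L| := abs_add_le _ _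
            _ ≤ Efac * L + L := by rw [abs_of_nonneg hL0']; linarith
        calc |besselJnat L 1 - L| * |besselJnat L 1 + L|
            ≤ (Efac * L ^ 3) * (Efac * L + L) :=
              mul_le_mul hJ1 h2 (abs_nonneg _) (by positivity)
          _ = (Efac ^ 2 + Efac) * L ^ 4 := by ring
      have hdecomp : KBeDiag L 0 - (0 + L ^ 2 * ((1 : ℝ) - 0))
          = ((besselJnat L 1) ^ 2 - L ^ 2) + ∑' k : ℕ, (besselJnat L (2 + k)) ^ 2 := by
        rw [hKval]; ring
      rw [hdecomp]
      have habs := abs_add_le ((besselJnat L 1) ^ 2 - L ^ 2)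
        (∑' k : ℕ, (besselJnat L (2 + k)) ^ 2)
      have t4 : |∑' k : ℕ, (besselJnat L (2 + k)) ^ 2| ≤ Efac ^ 3 * L ^ 4 := by
        rw [abs_of_nonneg htail_nn]; exact htail_le
      have : |((besselJnat L 1) ^ 2 - L ^ 2) + ∑' k : ℕ, (besselJnat L (2 + k)) ^ 2|
          ≤ (Efac ^ 2 + Efac) * L ^ 4 + Efac ^ 3 * L ^ 4 := by linarith
      refine this.trans ?_
      have hcomb : (Efac ^ 2 + Efac) * L ^ 4 + Efac ^ 3 * L ^ 4
          = (Efac ^ 3 + Efac ^ 2 + Efac) * L ^ 4 := by ring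
      rw [hcomb]
      exact mul_le_mul_of_nonneg_right (by nlinarith) hL4
    · -- m ≥ 1
      rw [if_neg (by omega), if_neg (by omega), if_neg (by omega)]
      have hKeq : KBeDiag L m = ∑' k : ℕ, (besselJnat L ((m.toNat + 1) + k)) ^ 2 := by
        rw [hK]
        exact tsum_congr fun k => by
          show besselJint L ((k : ℤ) + (m + 1)) * besselJint L ((k : ℤ) + (m + 1)) = _
          rw [besselJint_mul_self,
            show (((k : ℤ) + (m + 1)).natAbs) = (m.toNat + 1) + k from by omega]
      have hKnn : 0 ≤ KBeDiag L m := by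
        rw [hKeq]; exact tsum_nonneg fun k => by positivity
      have hKle : KBeDiag L m ≤ Efac ^ 3 * L ^ (2 * (m.toNat + 1)) := by
        rw [hKeq]; exact tsum_sq_shift_le hL0' hL1 _
      have hpow : L ^ (2 * (m.toNat + 1)) ≤ L ^ 4 :=
        pow_le_pow_of_le_one hL0' hL1 (by omega)
      have hzero : ((0 : ℝ) + L ^ 2 * ((0 : ℝ) - 0)) = 0 := by ring
      rw [hzero, sub_zero, abs_of_nonneg hKnn]
      calc KBeDiag L m ≤ Efac ^ 3 * L ^ (2 * (m.toNat + 1)) := hKle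
        _ ≤ Efac ^ 3 * L ^ 4 := mul_le_mul_of_nonneg_left hpow (by positivity)
        _ ≤ (2 * Efac ^ 3 + 2 * Efac ^ 2 + 2 * Efac + 1) * L ^ 4 :=
          mul_le_mul_of_nonneg_right (by nlinarith) hL4
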